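/- For all s, t ∈ [0,π], the Minkowski product of the spherical caps centered at 1 satisfies: U(1,s) ⊗ U(1,t) = U(1, s+t) if s + t ∈ [0,π], and U(1,s) ⊗ U(1,t) = S³ if s + t ∈ [π, 2π]. -/

import Mathlib

open Real Set

noncomputable section

abbrev H : Type := Quaternion ℝ

/-- Inner product on ℍ regarded as ℝ⁴ : ⟨A,B⟩ = re(A B*). -/
def qInner (a b : H) : ℝ := (a * star b).re

/-- The set of unit quaternions, the 3-sphere S³. -/
def S3 : Set H := {u : H | ‖u‖ = 1}

/-- Spherical cap U(U₀,t) = {U ∈ S³ : ⟨U,U₀⟩ ≥ cos t}. -/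
def cap (u₀ : H) (t : ℝ) : Set H := {u : H | u ∈ S3 ∧ qInner u u₀ ≥ Real.cos t}

/-- Minkowski product of two quaternion sets. -/
def mprod (U V : Set H) : Set H := Set.image2 (· * ·) U V

/-- exp(s n) = cos s + (sin s) n for purely imaginary unit n. -/
def qexp (s : ℝ) (n : H) : H := (Real.cos s : H) + Real.sin s • n

/-- The boundary (frontier) of A in the subspace topology of S³:
for A ⊆ S³ this coincides with the frontier taken in the topological subspace S³. -/
def bdryIn (A : Set H) : Set H := S3 ∩ closure A ∩ closure (S3 \ A)

-- auxiliary lemmas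

lemma qInner_one (u : H) : qInner u 1 = u.re := by
  simp [qInner]

lemma norm_im_sq (u : H) : ‖u.im‖ ^ 2 = ‖u‖ ^ 2 - u.re ^ 2 := by
  have h1 : ‖u.im‖ ^ 2 = Quaternion.normSq u.im := by
    rw [Quaternion.normSq_eq_norm_mul_self, sq]
  have h2 : ‖u‖ ^ 2 = Quaternion.normSq u := by
    rw [Quaternion.normSq_eq_norm_mul_self, sq]
  rw [h1, h2, Quaternion.normSq_def', Quaternion.normSq_def']
  simp
  ring

lemma re_mul_eq (u v : H) : (u * v).re = u.re * v.re - (u.im * star v.im).re := by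
  simp [Quaternion.re_mul]
  ring

lemma arccos_le_of_cos_le {x c : ℝ} (hx : -1 ≤ x) (hc0 : 0 ≤ c) (hcπ : c ≤ π)
    (h : Real.cos c ≤ x) : Real.arccos x ≤ c := by
  rcases le_or_gt x 1 with hx1 | hx1
  · have := Real.strictAntiOn_arccos.antitoneOn
      (a := Real.cos c) (b := x)
      ⟨Real.neg_one_le_cos c, Real.cos_le_one c⟩ ⟨hx, hx1⟩ h
    calc Real.arccos x ≤ Real.arccos (Real.cos c) := this
      _ = c := Real.arccos_cos hc0 hcπ
  · rw [Real.arccos_eq_zero.2 hx1.le]; exact hc0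

-- forward bound
lemma re_mul_ge {s t : ℝ} (hs : s ∈ Set.Icc 0 π) (ht : t ∈ Set.Icc 0 π)
    (hst : s + t ≤ π) {u v : H} (hu : ‖u‖ = 1) (hv : ‖v‖ = 1)
    (hur : Real.cos s ≤ u.re) (hvr : Real.cos t ≤ v.re) :
    Real.cos (s + t) ≤ (u * v).re := by
  have hu2 : ‖u.im‖ ^ 2 = 1 - u.re ^ 2 := by rw [norm_im_sq, hu]; ring
  have hv2 : ‖v.im‖ ^ 2 = 1 - v.re ^ 2 := by rw [norm_im_sq, hv]; ring
  have hure : u.re ^ 2 ≤ 1 := by nlinarith [sq_nonneg ‖u.im‖]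
  have hvre : v.re ^ 2 ≤ 1 := by nlinarith [sq_nonneg ‖v.im‖]
  have hu1 : -1 ≤ u.re := by nlinarith
  have hu1' : u.re ≤ 1 := by nlinarith
  have hv1 : -1 ≤ v.re := by nlinarith
  have hv1' : v.re ≤ 1 := by nlinarith
  set α := Real.arccos u.re with hα
  set β := Real.arccos v.re with hβ
  have hαs : α ≤ s := arccos_le_of_cos_le hu1 hs.1 hs.2 hur
  have hβt : β ≤ t := arccos_le_of_cos_le hv1 ht.1 ht.2 hvr
  have hcα : Real.cos α = u.re := Real.cos_arccos hu1 hu1'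
  have hcβ : Real.cos β = v.re := Real.cos_arccos hv1 hv1'
  have hsα : Real.sin α = ‖u.im‖ := by
    rw [hα, Real.sin_arccos, ← hu2, Real.sqrt_sq (norm_nonneg _)]
  have hsβ : Real.sin β = ‖v.im‖ := by
    rw [hβ, Real.sin_arccos, ← hv2, Real.sqrt_sq (norm_nonneg _)]
  have hCS : (u.im * star v.im).re ≤ ‖u.im‖ * ‖v.im‖ := by
    have := real_inner_le_norm u.im v.im
    rwa [Quaternion.inner_def] at this
  have key : Real.cos (α + β) ≤ (u * v).re := by
    rw [Real.cos_add, re_mul_eq, hcα, hcβ, hsα, hsβ]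
    linarith
  have h1 : Real.cos (s + t) ≤ Real.cos (α + β) := by
    apply Real.cos_le_cos_of_nonneg_of_le_pi
    · exact add_nonneg (Real.arccos_nonneg _) (Real.arccos_nonneg _)
    · exact hst
    · linarith
  linarith

-- qexp lemmas
lemma qexp_re (a : ℝ) (n : H) (hn : n.re = 0) : (qexp a n).re = Real.cos a := by
  simp [qexp, hn]

lemma qexp_norm (a : ℝ) (n : H) (hn : n.re = 0) (hn1 : ‖n‖ = 1) : ‖qexp a n‖ = 1 := by
  have him : (qexp a n).im = Real.sin a • n := by
    have : n.im = n := by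
      have := n.re_add_im
      rwa [hn, Quaternion.coe_zero, zero_add] at this
    simp [qexp, Quaternion.ext_iff, hn, Quaternion.im_smul, Quaternion.im_coe]
  have hsq : ‖qexp a n‖ ^ 2 = 1 := by
    have h := norm_im_sq (qexp a n)
    rw [him, qexp_re a n hn, norm_smul, hn1, Real.norm_eq_abs] at h
    rw [mul_one, sq_abs] at h
    nlinarith [Real.sin_sq_add_cos_sq a]
  have := Real.sqrt_sq (norm_nonneg (qexp a n))
  rw [hsq] at this
  simpa using this.symm

lemma qexp_mul (a b : ℝ) (n : H) (hn : n * n = -1) :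
    qexp a n * qexp b n = qexp (a + b) n := by
  simp only [qexp, Real.cos_add, Real.sin_add]
  have h1 : (Real.cos a : H) * (Real.sin b • n) = (Real.cos a * Real.sin b) • n := by
    rw [Quaternion.coe_mul_eq_smul, smul_smul]
  have h2 : (Real.sin a • n) * (Real.cos b : H) = (Real.sin a * Real.cos b) • n := by
    rw [Quaternion.mul_coe_eq_smul, smul_smul, mul_comm]
  have h3 : (Real.sin a • n) * (Real.sin b • n) = - ((Real.sin a * Real.sin b : ℝ) : H) := by
    rw [smul_mul_assoc, mul_smul_comm, hn, smul_smul, smul_neg, ← Quaternion.coe_one,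
      Quaternion.smul_coe, mul_one]
  rw [add_mul, mul_add, mul_add, h1, h2, h3, ← Quaternion.coe_mul]
  push_cast
  module

lemma cap_one_mem {s a : ℝ} (hs : s ∈ Set.Icc 0 π) (ha : 0 ≤ a) (has : a ≤ s)
    {n : H} (hn : n.re = 0) (hn1 : ‖n‖ = 1) : qexp a n ∈ cap 1 s := by
  refine ⟨qexp_norm a n hn hn1, ?_⟩
  rw [qInner_one, qexp_re a n hn]
  exact Real.cos_le_cos_of_nonneg_of_le_pi ha hs.2 has

lemma decomp (w : H) (hw : ‖w‖ = 1) :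
    ∃ n : H, n.re = 0 ∧ ‖n‖ = 1 ∧ n * n = -1 ∧ w = qexp (Real.arccos w.re) n := by
  have hw2 : ‖w.im‖ ^ 2 = 1 - w.re ^ 2 := by rw [norm_im_sq, hw]; ring
  have hre2 : w.re ^ 2 ≤ 1 := by nlinarith [sq_nonneg ‖w.im‖]
  have h1 : -1 ≤ w.re := by nlinarith
  have h1' : w.re ≤ 1 := by nlinarith
  have hc : Real.cos (Real.arccos w.re) = w.re := Real.cos_arccos h1 h1'
  have hsin : Real.sin (Real.arccos w.re) = ‖w.im‖ := by
    rw [Real.sin_arccos, ← hw2, Real.sqrt_sq (norm_nonneg _)]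
  have star_neg : ∀ m : H, m.re = 0 → star m = -m := by
    intro m hm
    ext <;> simp [hm]
  have mul_self : ∀ m : H, m.re = 0 → ‖m‖ = 1 → m * m = -1 := by
    intro m hm hm1
    have e1 : m * star m = ((Quaternion.normSq m : ℝ) : H) := Quaternion.mul_star_eq_coe m
    rw [star_neg m hm, mul_neg] at e1
    have hns : (Quaternion.normSq m : ℝ) = 1 := by
      rw [Quaternion.normSq_eq_norm_mul_self, hm1]; ring
    have e2 : -(m * m) = (1 : H) := by rw [e1, hns]; simp
    exact neg_eq_iff_eq_neg.mp e2
  by_cases him : w.im = 0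
  · set n0 : H := ⟨0, 1, 0, 0⟩ with hn0def
    have hns : Quaternion.normSq n0 = 1 := by
      rw [Quaternion.normSq_def']; norm_num [hn0def]
    have hn0norm : ‖n0‖ = 1 := by
      have h := Quaternion.normSq_eq_norm_mul_self n0
      rw [hns] at h
      nlinarith [norm_nonneg n0]
    have hn0re : n0.re = 0 := by rw [hn0def]
    refine ⟨n0, hn0re, hn0norm, mul_self _ hn0re hn0norm, ?_⟩
    · have hs0 : Real.sin (Real.arccos w.re) = 0 := by
        rw [hsin, him]; simp
      have : w = (w.re : H) := by
        have := w.re_add_im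
        rw [him, add_zero] at this
        exact this.symm
      rw [qexp, hs0, zero_smul, add_zero, hc]
      exact this
  · have hnim : ‖w.im‖ ≠ 0 := norm_ne_zero_iff.2 him
    refine ⟨‖w.im‖⁻¹ • w.im, by simp, ?_, ?_, ?_⟩
    · rw [norm_smul, norm_inv, norm_norm, inv_mul_cancel₀ hnim]
    · apply mul_self
      · simp
      · rw [norm_smul, norm_inv, norm_norm, inv_mul_cancel₀ hnim]
    · rw [qexp, hc, hsin, smul_smul, mul_inv_cancel₀ hnim, one_smul]
      exact w.re_add_im.symm

lemma surj {s t : ℝ} (hs : s ∈ Set.Icc 0 π) (ht : t ∈ Set.Icc 0 π) {w : H}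
    (hw : ‖w‖ = 1) (hθ : Real.arccos w.re ≤ s + t) :
    w ∈ mprod (cap 1 s) (cap 1 t) := by
  obtain ⟨n, hn0, hn1, hnn, hwe⟩ := decomp w hw
  set θ := Real.arccos w.re with hθdef
  set θ₁ := min θ s with hθ₁
  set θ₂ := θ - θ₁ with hθ₂
  have hθnn : 0 ≤ θ := Real.arccos_nonneg _
  have h10 : 0 ≤ θ₁ := le_min hθnn hs.1
  have h1s : θ₁ ≤ s := min_le_right _ _
  have h20 : 0 ≤ θ₂ := sub_nonneg.2 (min_le_left _ _)
  have h2t : θ₂ ≤ t := by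
    rcases le_or_gt θ s with h | h
    · have : θ₁ = θ := min_eq_left h
      rw [hθ₂, this]; simpa using ht.1
    · have : θ₁ = s := min_eq_right h.le
      rw [hθ₂, this]; linarith
  refine ⟨qexp θ₁ n, cap_one_mem hs h10 h1s hn0 hn1,
    qexp θ₂ n, cap_one_mem ht h20 h2t hn0 hn1, ?_⟩
  show qexp θ₁ n * qexp θ₂ n = w
  rw [qexp_mul _ _ _ hnn]
  have : θ₁ + θ₂ = θ := by rw [hθ₂]; ring
  rw [this, ← hwe]

theorem stmt5 (s t : ℝ) (hs : s ∈ Set.Icc 0 π) (ht : t ∈ Set.Icc 0 π) :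
    (s + t ∈ Set.Icc 0 π → mprod (cap 1 s) (cap 1 t) = cap 1 (s + t)) ∧
      (s + t ∈ Set.Icc π (2 * π) → mprod (cap 1 s) (cap 1 t) = S3) := by
  constructor
  · intro hst
    ext w
    constructor
    · rintro ⟨u, ⟨hu1, hu2⟩, v, ⟨hv1, hv2⟩, rfl⟩
      rw [qInner_one] at hu2 hv2
      refine ⟨?_, ?_⟩
      · show ‖u * v‖ = 1
        rw [norm_mul, hu1, hv1, mul_one]
      · rw [qInner_one]
        exact re_mul_ge hs ht hst.2 hu1 hv1 hu2 hv2
    · rintro ⟨hw1, hw2⟩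
      rw [qInner_one] at hw2
      apply surj hs ht hw1
      have hw2' : ‖w.im‖ ^ 2 = 1 - w.re ^ 2 := by rw [norm_im_sq, hw1]; ring
      have h1 : -1 ≤ w.re := by nlinarith [sq_nonneg ‖w.im‖]
      exact arccos_le_of_cos_le h1 hst.1 hst.2 hw2
  · intro hst
    ext w
    constructor
    · rintro ⟨u, ⟨hu1, _⟩, v, ⟨hv1, _⟩, rfl⟩
      show ‖u * v‖ = 1
      rw [norm_mul, hu1, hv1, mul_one]
    · intro hw
      exact surj hs ht hw (le_trans (Real.arccos_le_pi _) hst.1)
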